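/- (Quadratic lower bound for the suffix-link closure of branching nodes) For every n ≥ 1, consider the p-string T_n = x_1 a_1 ⋯ x_n a_n x_1 a_1 ⋯ x_n a_n y_1 a_1 ⋯ y_n a_n z $ over disjoint alphabets, where x_1, …, x_n, y_1, …, y_n, z are pairwise distinct parameter symbols, a_1, …, a_n, $ are pairwise distinct constant symbols, and |T_n| = 6n + 2. For 1 ≤ i ≤ n, let w_i = 0 a_i 0 a_{i+1} ⋯ 0 a_n 0 a_1 ⋯ 0 a_{i−1} (a pv-string of length 2n). Then each w_i is a branching element of PrevSub(T_n) (indeed w_i·0 ∈ PrevSub(T_n) and w_i·(2n) ∈ PrevSub(T_n)), and the set { sl^j(w_i) : 1 ≤ i ≤ n, 0 ≤ j < 2n } is a subset of PrevSub(T_n) of cardinality exactly 2n². -/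

import Mathlib

open List

variable {σ π : Type*}

/-- The prev-encoding symbol of `w` at (0-indexed) position `i`:
constants are kept; a parameter is encoded by the distance to its
previous occurrence, or `0` if it has no previous occurrence. -/
def prevAt [DecidableEq σ] [DecidableEq π] (w : List (σ ⊕ π)) (i : ℕ) : σ ⊕ ℕ :=
  match w[i]? with
  | some (Sum.inl a) => Sum.inl a
  | some (Sum.inr x) =>
      let s := (Finset.range i).filter (fun j => w[j]? = some (Sum.inr x))
      if h : s.Nonempty then Sum.inr (i - s.max' h) else Sum.inr 0
  | none => Sum.inr 0

/-- The prev-encoding `⟨w⟩` of a p-string `w`. -/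
def prevEncode [DecidableEq σ] [DecidableEq π] (w : List (σ ⊕ π)) : List (σ ⊕ ℕ) :=
  (List.range w.length).map (prevAt w)

/-- The `k`-re-encoding `⟨u⟩ₖ` of a pv-string `u`: a numeric symbol `u[i]`
(1-indexed) is replaced by `0` whenever `u[i] ≥ i - k + 1`. -/
def reEncode (k : ℕ) (u : List (σ ⊕ ℕ)) : List (σ ⊕ ℕ) :=
  (List.range u.length).map (fun i =>
    match u[i]? with
    | some (Sum.inl a) => Sum.inl a
    | some (Sum.inr m) => if i + 2 ≤ m + k then Sum.inr (0 : ℕ) else Sum.inr m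
    | none => Sum.inr 0)

/-- The implicit suffix link `sl(u) = ⟨u[2:]⟩₁`. -/
def sl (u : List (σ ⊕ ℕ)) : List (σ ⊕ ℕ) := reEncode 1 u.tail

/-- The set of prev-encoded substrings of `T`. -/
def PrevSub [DecidableEq σ] [DecidableEq π] (T : List (σ ⊕ π)) : Set (List (σ ⊕ ℕ)) :=
  { u | ∃ w, w <:+: T ∧ u = prevEncode w }

/-- `u` is a leaf of `PrevSub T`: it belongs to `PrevSub T` and is not a
proper prefix of any element of `PrevSub T`. -/
def IsLeaf [DecidableEq σ] [DecidableEq π] (T : List (σ ⊕ π)) (u : List (σ ⊕ ℕ)) : Prop :=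
  u ∈ PrevSub T ∧ ∀ v ∈ PrevSub T, u <+: v → u = v

/-- `u` is a branching element of `PrevSub T`: two distinct one-symbol
extensions of `u` belong to `PrevSub T`. -/
def Branching [DecidableEq σ] [DecidableEq π] (T : List (σ ⊕ π)) (u : List (σ ⊕ ℕ)) : Prop :=
  u ∈ PrevSub T ∧
    ∃ a b : σ ⊕ ℕ, a ≠ b ∧ u ++ [a] ∈ PrevSub T ∧ u ++ [b] ∈ PrevSub T

/-- The text `T_n = x₁a₁⋯xₙaₙ x₁a₁⋯xₙaₙ y₁a₁⋯yₙaₙ z $` over `Σ = ℕ`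
(constants `aᵢ = i` for `1 ≤ i ≤ n`, sentinel `$ = 0`) and `Π = ℕ`
(parameters `xᵢ = i`, `yᵢ = n + i`, `z = 0`), all pairwise distinct. -/
def Tpar (n : ℕ) : List (ℕ ⊕ ℕ) :=
  ((List.range n).flatMap fun i => [Sum.inr (i + 1), Sum.inl (i + 1)]) ++
  ((List.range n).flatMap fun i => [Sum.inr (i + 1), Sum.inl (i + 1)]) ++
  ((List.range n).flatMap fun i => [Sum.inr (n + i + 1), Sum.inl (i + 1)]) ++
  [Sum.inr 0, Sum.inl 0]

/-- The pv-string `wᵢ = 0 aᵢ 0 aᵢ₊₁ ⋯ 0 aₙ 0 a₁ ⋯ 0 aᵢ₋₁` of length `2n`,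
with the indices of the `a`'s taken cyclically in `{1, …, n}`. -/
def wpar (n i : ℕ) : List (ℕ ⊕ ℕ) :=
  (List.range n).flatMap fun j => [Sum.inr 0, Sum.inl ((i - 1 + j) % n + 1)]

section Aux
variable {α : Type*}

lemma pairFlat_length (f g : ℕ → α) (n : ℕ) :
    ((List.range n).flatMap fun j => [f j, g j]).length = 2 * n := by
  induction n with
  | zero => simp
  | succ n ih =>
    rw [List.range_succ, List.flatMap_append, List.length_append, ih]
    simp; omega

lemma pairFlat_getElem? (f g : ℕ → α) (n m : ℕ) :
    ((List.range n).flatMap fun j => [f j, g j])[m]? =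
      if m < 2 * n then some (if m % 2 = 0 then f (m / 2) else g (m / 2)) else none := by
  induction n with
  | zero => simp
  | succ n ih =>
    rw [List.range_succ, List.flatMap_append]
    rcases lt_or_ge m (2 * n) with h | h
    · rw [List.getElem?_append_left (by rw [pairFlat_length]; exact h), ih]
      simp only [h, if_true]
      have : m < 2 * (n + 1) := by omega
      simp [this]
    · rw [List.getElem?_append_right (by rw [pairFlat_length]; exact h), pairFlat_length]
      rcases Nat.lt_or_ge m (2 * (n + 1)) with h2 | h2
      · rcases (by omega : m = 2*n ∨ m = 2*n+1) with rfl | rfl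
        · simp
        · have h1 : (2*n+1) % 2 = 1 := by omega
          have h2 : (2*n+1) / 2 = n := by omega
          simp [h1, h2]; omega
      · have h3 : ¬ m < 2 * (n+1) := by omega
        simp only [h3, if_false]
        have : 2 ≤ m - 2 * n := by omega
        rcases Nat.exists_eq_add_of_le this with ⟨k, hk⟩
        simp [hk]; omega

end Aux
section Aux2
variable [DecidableEq σ] [DecidableEq π]

lemma prevEncode_length (w : List (σ ⊕ π)) : (prevEncode w).length = w.length := by
  simp [prevEncode]

lemma prevEncode_getElem? (w : List (σ ⊕ π)) (k : ℕ) :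
    (prevEncode w)[k]? = if k < w.length then some (prevAt w k) else none := by
  by_cases h : k < w.length
  · rw [if_pos h, prevEncode, List.getElem?_map, List.getElem?_range h]; rfl
  · rw [if_neg h, List.getElem?_eq_none]
    rw [prevEncode_length]; omega

lemma prevAt_inl {w : List (σ ⊕ π)} {i : ℕ} {a : σ} (h : w[i]? = some (Sum.inl a)) :
    prevAt w i = Sum.inl a := by
  unfold prevAt; rw [h]

lemma prevAt_inr_fresh {w : List (σ ⊕ π)} {i : ℕ} {x : π} (h : w[i]? = some (Sum.inr x))
    (hf : ∀ j < i, w[j]? ≠ some (Sum.inr x)) : prevAt w i = Sum.inr 0 := by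
  unfold prevAt; rw [h]
  simp only
  rw [dif_neg]
  rintro ⟨j, hj⟩
  rw [Finset.mem_filter, Finset.mem_range] at hj
  exact hf j hj.1 hj.2

lemma prevAt_inr_prev {w : List (σ ⊕ π)} {i p : ℕ} {x : π} (h : w[i]? = some (Sum.inr x))
    (hp : p < i) (hw : w[p]? = some (Sum.inr x))
    (hu : ∀ j < i, w[j]? = some (Sum.inr x) → j = p) : prevAt w i = Sum.inr (i - p) := by
  unfold prevAt; rw [h]
  simp only
  have hs : (Finset.range i).filter (fun j => w[j]? = some (Sum.inr x)) = {p} := by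
    ext j
    simp only [Finset.mem_filter, Finset.mem_range, Finset.mem_singleton]
    constructor
    · rintro ⟨h1, h2⟩; exact hu j h1 h2
    · rintro rfl; exact ⟨hp, hw⟩
  rw [dif_pos (by rw [hs]; exact ⟨p, Finset.mem_singleton_self p⟩)]
  congr 1
  congr 1
  apply _root_.le_antisymm
  · apply Finset.max'_le
    intro y hy
    rw [hs, Finset.mem_singleton] at hy
    omega
  · apply Finset.le_max'
    rw [hs]; exact Finset.mem_singleton_self p

/-- No parameter occurs twice. -/
def NoRepParam (w : List (σ ⊕ π)) : Prop :=
  ∀ (a b : ℕ) (x : π), a < b → w[a]? = some (Sum.inr x) → w[b]? ≠ some (Sum.inr x)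

lemma prevEncode_eq_map {w : List (σ ⊕ π)} (h : NoRepParam w) :
    prevEncode w = w.map (Sum.map id fun _ => 0) := by
  apply List.ext_getElem?
  intro k
  rw [prevEncode_getElem?, List.getElem?_map]
  by_cases hk : k < w.length
  · rw [if_pos hk]
    have he : w[k]? = some w[k] := List.getElem?_eq_getElem hk
    rw [he]
    cases hwk : w[k] with
    | inl a => rw [prevAt_inl (hwk ▸ he)]; rfl
    | inr x =>
        rw [prevAt_inr_fresh (hwk ▸ he) (fun j hj hcon => h j k x hj hcon (hwk ▸ he))]
        rfl
  · rw [if_neg hk, List.getElem?_eq_none (by omega)]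
    rfl

lemma prevEncode_take (w : List (σ ⊕ π)) (m : ℕ) :
    prevEncode (w.take m) = (prevEncode w).take m := by
  apply List.ext_getElem?
  intro k
  by_cases hk : k < m
  swap
  · rw [List.getElem?_eq_none (l := prevEncode (w.take m)) (by rw [prevEncode_length]; simp; omega),
      List.getElem?_eq_none (by simp [prevEncode_length]; omega)]
  rw [List.getElem?_take_of_lt hk, prevEncode_getElem?, prevEncode_getElem?]
  have haux : ∀ j < m, (w.take m)[j]? = w[j]? := by
    intro j hj
    rw [List.getElem?_take_of_lt hj]
  · by_cases hk2 : k < w.length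
    · rw [if_pos (by simp; omega), if_pos hk2]
      congr 1
      unfold prevAt
      rw [haux k hk]
      cases hw : w[k]? with
      | none => rfl
      | some e =>
        cases e with
        | inl a => rfl
        | inr x =>
          simp only
          have : (Finset.range k).filter (fun j => (w.take m)[j]? = some (Sum.inr x)) =
              (Finset.range k).filter (fun j => w[j]? = some (Sum.inr x)) := by
            apply Finset.filter_congr
            intro j hj
            rw [Finset.mem_range] at hj
            rw [haux j (by omega)]
          rw [this]
    · rw [if_neg (by simp; omega), if_neg hk2]

end Aux2
section Aux3

def Xl (n : ℕ) : List (ℕ ⊕ ℕ) := (List.range n).flatMap fun i => [Sum.inr (i + 1), Sum.inl (i + 1)]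
def Yl (n : ℕ) : List (ℕ ⊕ ℕ) := (List.range n).flatMap fun i => [Sum.inr (n + i + 1), Sum.inl (i + 1)]
def Tbody (n : ℕ) : List (ℕ ⊕ ℕ) := Xl n ++ Xl n ++ Yl n

lemma Tpar_eq (n : ℕ) : Tpar n = Tbody n ++ [Sum.inr 0, Sum.inl 0] := by
  simp [Tpar, Tbody, Xl, Yl, List.append_assoc]

lemma Xl_length (n : ℕ) : (Xl n).length = 2 * n := pairFlat_length _ _ n
lemma Yl_length (n : ℕ) : (Yl n).length = 2 * n := pairFlat_length _ _ n
lemma Tbody_length (n : ℕ) : (Tbody n).length = 6 * n := by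
  simp [Tbody, Xl_length, Yl_length]; omega

lemma Tpar_length (n : ℕ) : (Tpar n).length = 6 * n + 2 := by
  rw [Tpar_eq, List.length_append, Tbody_length]; rfl

lemma mod_ne_shift {n d b : ℕ} (h1 : 0 < d) (h2 : d < n) : (b + d) % n ≠ b % n := by
  intro he
  have hd : n ∣ (b + d) - b := (Nat.modEq_iff_dvd' (by omega)).mp he.symm
  have := Nat.le_of_dvd (by omega) hd
  omega

lemma Tbody_getElem? (n m : ℕ) (h : m < 6 * n) :
    (Tbody n)[m]? = some (if m % 2 = 1 then Sum.inl (m / 2 % n + 1)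
      else if m / 2 < 2 * n then Sum.inr (m / 2 % n + 1) else Sum.inr (m / 2 - n + 1)) := by
  unfold Tbody
  rcases (by omega : m < 2 * n ∨ (2 * n ≤ m ∧ m < 4 * n) ∨ (4 * n ≤ m ∧ m < 6 * n)) with
    h1 | ⟨h1, h2⟩ | ⟨h1, h2⟩
  · rw [List.getElem?_append_left (by rw [List.length_append, Xl_length]; omega),
      List.getElem?_append_left (by rw [Xl_length]; omega)]
    rw [show (Xl n)[m]? = _ from pairFlat_getElem? _ _ n m, if_pos h1]
    have hq : m / 2 < n := by omega
    have hmod : m / 2 % n = m / 2 := Nat.mod_eq_of_lt hq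
    have h2n : m / 2 < 2 * n := by omega
    rcases (by omega : m % 2 = 0 ∨ m % 2 = 1) with hm | hm <;> simp [hm, hmod, h2n]
  · rw [List.getElem?_append_left (by rw [List.length_append, Xl_length]; omega),
      List.getElem?_append_right (by rw [Xl_length]; omega), Xl_length]
    rw [show (Xl n)[m - 2*n]? = _ from pairFlat_getElem? _ _ n (m - 2*n), if_pos (by omega)]
    have hd : (m - 2 * n) / 2 = m / 2 - n := by omega
    have hmod : m / 2 % n = m / 2 - n := by
      rw [Nat.mod_eq_sub_mod (by omega)]
      exact Nat.mod_eq_of_lt (by omega)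
    have hpar : (m - 2 * n) % 2 = m % 2 := by omega
    have h2n : m / 2 < 2 * n := by omega
    rcases (by omega : m % 2 = 0 ∨ m % 2 = 1) with hm | hm <;>
      simp [hpar, hm, hd, hmod, h2n] <;> omega
  · rw [List.getElem?_append_right (by rw [List.length_append, Xl_length]; omega),
      List.length_append, Xl_length]
    have hidx : m - (2 * n + 2 * n) = m - 4 * n := by omega
    rw [hidx, show (Yl n)[m - 4*n]? = _ from pairFlat_getElem? _ _ n (m - 4*n), if_pos (by omega)]
    have hd : (m - 4 * n) / 2 = m / 2 - 2 * n := by omega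
    have hmod : m / 2 % n = m / 2 - 2 * n := by
      rw [Nat.mod_eq_sub_mod (by omega), Nat.mod_eq_sub_mod (by omega)]
      rw [Nat.mod_eq_of_lt (by omega)]
      omega
    have hpar : (m - 4 * n) % 2 = m % 2 := by omega
    have h2n : ¬ m / 2 < 2 * n := by omega
    rcases (by omega : m % 2 = 0 ∨ m % 2 = 1) with hm | hm <;>
      simp [hpar, hm, hd, hmod, h2n] <;> omega

def win (n a b : ℕ) : List (ℕ ⊕ ℕ) := ((Tbody n).drop a).take b

lemma win_infix (n a b : ℕ) : win n a b <:+: Tpar n := by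
  have h1 : win n a b <+: (Tbody n).drop a := List.take_prefix _ _
  have h2 : (Tbody n).drop a <:+ Tbody n := List.drop_suffix _ _
  have h3 : Tbody n <+: Tpar n := ⟨[Sum.inr 0, Sum.inl 0], (Tpar_eq n).symm⟩
  exact h1.isInfix.trans (h2.isInfix.trans h3.isInfix)

lemma win_getElem?_lt {k b : ℕ} (n a : ℕ) (hk : k < b) : (win n a b)[k]? = (Tbody n)[a + k]? := by
  rw [win, List.getElem?_take_of_lt hk, List.getElem?_drop]

lemma win_length {n a b : ℕ} (h : a + b ≤ 6 * n) : (win n a b).length = b := by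
  simp [win, Tbody_length]; omega

lemma winval2 (n i' : ℕ) (hi : i' + 1 ≤ n) (m : ℕ) (hm : m ≤ 2 * n) :
    (Tbody n)[2 * n + 2 * i' + m]? =
      some (if m % 2 = 1 then Sum.inl ((i' + m / 2) % n + 1) else Sum.inr (i' + 1 + m / 2)) := by
  have h6 : 2 * n + 2 * i' + m < 6 * n := by omega
  rw [Tbody_getElem? n _ h6]
  have hpar : (2 * n + 2 * i' + m) % 2 = m % 2 := by omega
  have hdiv : (2 * n + 2 * i' + m) / 2 = n + (i' + m / 2) := by omega
  have hmod : (2 * n + 2 * i' + m) / 2 % n = (i' + m / 2) % n := by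
    rw [hdiv, Nat.add_mod_left]
  congr 1
  rcases (by omega : m % 2 = 0 ∨ m % 2 = 1) with hm2 | hm2
  · rw [hpar, hm2, if_neg (by omega)]
    by_cases hc : (2 * n + 2 * i' + m) / 2 < 2 * n
    · rw [if_pos hc, hmod, Nat.mod_eq_of_lt (by omega)]
      congr 1; omega
    · rw [if_neg hc, hdiv]
      congr 1; omega
  · rw [hpar, hm2, hmod]; simp

lemma winval1 (n i' : ℕ) (hi : i' + 1 ≤ n) (m : ℕ) (hm : m ≤ 2 * n) :
    (Tbody n)[2 * i' + m]? =
      some (if m % 2 = 1 then Sum.inl ((i' + m / 2) % n + 1)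
            else Sum.inr ((i' + m / 2) % n + 1)) := by
  have h6 : 2 * i' + m < 6 * n := by omega
  rw [Tbody_getElem? n _ h6]
  have hpar : (2 * i' + m) % 2 = m % 2 := by omega
  have hdiv : (2 * i' + m) / 2 = i' + m / 2 := by omega
  have hc : (2 * i' + m) / 2 < 2 * n := by omega
  congr 1
  rcases (by omega : m % 2 = 0 ∨ m % 2 = 1) with hm2 | hm2
  · rw [hpar, hm2, if_neg (by omega), if_pos hc, hdiv, if_neg (by omega)]
  · rw [hpar, hm2, hdiv]; simp

lemma wpar_length (n i : ℕ) : (wpar n i).length = 2 * n := pairFlat_length _ _ n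

lemma wpar_getElem? (n i' m : ℕ) :
    (wpar n (i' + 1))[m]? =
      if m < 2 * n then
        some (if m % 2 = 0 then Sum.inr 0 else Sum.inl ((i' + m / 2) % n + 1))
      else none := by
  have := pairFlat_getElem? (fun _ => (Sum.inr 0 : ℕ ⊕ ℕ))
    (fun j => Sum.inl ((i' + 1 - 1 + j) % n + 1)) n m
  simpa [wpar] using this

end Aux3
section Aux4

lemma enc2full (n i' : ℕ) (hi : i' + 1 ≤ n) :
    prevEncode (win n (2 * n + 2 * i') (2 * n + 1)) = wpar n (i' + 1) ++ [Sum.inr 0] := by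
  have hlen : (win n (2 * n + 2 * i') (2 * n + 1)).length = 2 * n + 1 := win_length (by omega)
  have hval : ∀ k < 2 * n + 1, (win n (2 * n + 2 * i') (2 * n + 1))[k]? =
      some (if k % 2 = 1 then Sum.inl ((i' + k / 2) % n + 1) else Sum.inr (i' + 1 + k / 2)) := by
    intro k hk
    rw [win_getElem?_lt _ _ hk, winval2 n i' hi k (by omega)]
  apply List.ext_getElem?
  intro k
  rw [prevEncode_getElem?, hlen]
  by_cases hk : k < 2 * n + 1
  · rw [if_pos hk]
    rcases (by omega : k % 2 = 0 ∨ k % 2 = 1) with hk2 | hk2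
    · have hv : (win n (2 * n + 2 * i') (2 * n + 1))[k]? = some (Sum.inr (i' + 1 + k / 2)) := by
        rw [hval k hk]; simp [hk2]
      rw [prevAt_inr_fresh hv ?_]
      · by_cases hk3 : k < 2 * n
        · rw [List.getElem?_append_left (by rw [wpar_length]; omega), wpar_getElem?,
            if_pos hk3, if_pos hk2]
        · have hke : k = 2 * n := by omega
          subst hke
          rw [List.getElem?_append_right (by rw [wpar_length]), wpar_length]
          simp
      · intro j hj hcon
        have hvj := hval j (by omega)
        rcases (by omega : j % 2 = 0 ∨ j % 2 = 1) with hj2 | hj2 <;>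
          rw [hvj] at hcon <;> simp [hj2] at hcon
        omega
    · have hv : (win n (2 * n + 2 * i') (2 * n + 1))[k]? =
          some (Sum.inl ((i' + k / 2) % n + 1)) := by
        rw [hval k hk]; simp [hk2]
      rw [prevAt_inl hv]
      have hk3 : k < 2 * n := by omega
      rw [List.getElem?_append_left (by rw [wpar_length]; omega), wpar_getElem?,
        if_pos hk3, if_neg (by omega)]
  · rw [if_neg hk, eq_comm, List.getElem?_eq_none]
    rw [List.length_append, wpar_length]
    simp; omega

lemma encj (n i' : ℕ) (hi : i' + 1 ≤ n) (j : ℕ) (hj : j ≤ 2 * n) :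
    prevEncode (win n (2 * n + 2 * i' + j) (2 * n - j)) = (wpar n (i' + 1)).drop j := by
  have hlen : (win n (2 * n + 2 * i' + j) (2 * n - j)).length = 2 * n - j := win_length (by omega)
  have hval : ∀ k < 2 * n - j, (win n (2 * n + 2 * i' + j) (2 * n - j))[k]? =
      some (if (j + k) % 2 = 1 then Sum.inl ((i' + (j + k) / 2) % n + 1)
            else Sum.inr (i' + 1 + (j + k) / 2)) := by
    intro k hk
    rw [win_getElem?_lt _ _ hk, show 2 * n + 2 * i' + j + k = 2 * n + 2 * i' + (j + k) by omega,
      winval2 n i' hi (j + k) (by omega)]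
  apply List.ext_getElem?
  intro k
  rw [prevEncode_getElem?, hlen]
  by_cases hk : k < 2 * n - j
  · rw [if_pos hk, List.getElem?_drop, wpar_getElem?, if_pos (by omega)]
    rcases (by omega : (j + k) % 2 = 0 ∨ (j + k) % 2 = 1) with hk2 | hk2
    · have hv : (win n (2 * n + 2 * i' + j) (2 * n - j))[k]? =
          some (Sum.inr (i' + 1 + (j + k) / 2)) := by
        rw [hval k hk]; simp [hk2]
      rw [prevAt_inr_fresh hv ?_, if_pos hk2]
      · intro l hl hcon
        have hvl := hval l (by omega)
        rcases (by omega : (j + l) % 2 = 0 ∨ (j + l) % 2 = 1) with hl2 | hl2 <;>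
          rw [hvl] at hcon <;> simp [hl2] at hcon
        omega
    · have hv : (win n (2 * n + 2 * i' + j) (2 * n - j))[k]? =
          some (Sum.inl ((i' + (j + k) / 2) % n + 1)) := by
        rw [hval k hk]; simp [hk2]
      rw [prevAt_inl hv, if_neg (by omega)]
  · rw [if_neg hk, eq_comm, List.getElem?_eq_none]
    rw [List.length_drop, wpar_length]; omega

lemma enc1 (n i' : ℕ) (hi : i' + 1 ≤ n) :
    prevEncode (win n (2 * i') (2 * n + 1)) = wpar n (i' + 1) ++ [Sum.inr (2 * n)] := by
  have hlen : (win n (2 * i') (2 * n + 1)).length = 2 * n + 1 := win_length (by omega)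
  have hval : ∀ k < 2 * n + 1, (win n (2 * i') (2 * n + 1))[k]? =
      some (if k % 2 = 1 then Sum.inl ((i' + k / 2) % n + 1)
            else Sum.inr ((i' + k / 2) % n + 1)) := by
    intro k hk
    rw [win_getElem?_lt _ _ hk, winval1 n i' hi k (by omega)]
  apply List.ext_getElem?
  intro k
  rw [prevEncode_getElem?, hlen]
  by_cases hk : k < 2 * n + 1
  · rw [if_pos hk]
    by_cases hk3 : k < 2 * n
    · rcases (by omega : k % 2 = 0 ∨ k % 2 = 1) with hk2 | hk2
      · have hv : (win n (2 * i') (2 * n + 1))[k]? =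
            some (Sum.inr ((i' + k / 2) % n + 1)) := by
          rw [hval k hk]; simp [hk2]
        rw [prevAt_inr_fresh hv ?_]
        · rw [List.getElem?_append_left (by rw [wpar_length]; omega), wpar_getElem?,
            if_pos hk3, if_pos hk2]
        · intro j hj hcon
          have hvj := hval j (by omega)
          rcases (by omega : j % 2 = 0 ∨ j % 2 = 1) with hj2 | hj2 <;>
            rw [hvj] at hcon <;> simp [hj2] at hcon
          have hkn : k / 2 < n := by omega
          have := mod_ne_shift (n := n) (d := k / 2 - j / 2) (b := i' + j / 2)
            (by omega) (by omega)
          rw [show i' + j / 2 + (k / 2 - j / 2) = i' + k / 2 by omega] at this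
          exact this (by omega)
      · have hv : (win n (2 * i') (2 * n + 1))[k]? =
            some (Sum.inl ((i' + k / 2) % n + 1)) := by
          rw [hval k hk]; simp [hk2]
        rw [prevAt_inl hv]
        rw [List.getElem?_append_left (by rw [wpar_length]; omega), wpar_getElem?,
          if_pos hk3, if_neg (by omega)]
    · have hke : k = 2 * n := by omega
      subst hke
      have hmodn : (i' + n) % n = i' := by
        rw [Nat.add_mod_right]; exact Nat.mod_eq_of_lt (by omega)
      have hv : (win n (2 * i') (2 * n + 1))[2 * n]? = some (Sum.inr (i' + 1)) := by
        rw [hval (2 * n) (by omega)]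
        rw [if_neg (by omega), show (2 * n) / 2 = n by omega, hmodn]
      have hw0 : (win n (2 * i') (2 * n + 1))[0]? = some (Sum.inr (i' + 1)) := by
        rw [hval 0 (by omega)]
        simp [Nat.mod_eq_of_lt (show i' < n by omega)]
      have huniq : ∀ j < 2 * n, (win n (2 * i') (2 * n + 1))[j]? = some (Sum.inr (i' + 1)) →
          j = 0 := by
        intro j hj hcon
        by_contra hne
        have hvj := hval j (by omega)
        rcases (by omega : j % 2 = 0 ∨ j % 2 = 1) with hj2 | hj2 <;>
          rw [hvj] at hcon <;> simp [hj2] at hcon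
        have hjn : j / 2 < n := by omega
        have hj0 : 0 < j / 2 := by omega
        have := mod_ne_shift (n := n) (d := j / 2) (b := i') hj0 hjn
        rw [Nat.mod_eq_of_lt (show i' < n by omega)] at this
        exact this (by omega)
      rw [prevAt_inr_prev hv (by omega) hw0 huniq]
      rw [List.getElem?_append_right (by rw [wpar_length]), wpar_length]
      simp
  · rw [if_neg hk, eq_comm, List.getElem?_eq_none]
    rw [List.length_append, wpar_length]
    simp; omega

end Aux4
section Aux5

def AllZero (u : List (ℕ ⊕ ℕ)) : Prop := ∀ (k x : ℕ), u[k]? = some (Sum.inr x) → x = 0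

lemma reEncode_length (k : ℕ) (u : List (ℕ ⊕ ℕ)) : (reEncode k u).length = u.length := by
  simp [reEncode]

lemma reEncode_one_eq_self {u : List (ℕ ⊕ ℕ)} (h : AllZero u) : reEncode 1 u = u := by
  apply List.ext_getElem?
  intro k
  by_cases hk : k < u.length
  · rw [reEncode, List.getElem?_map, List.getElem?_range hk, Option.map_some]
    have he : u[k]? = some u[k] := List.getElem?_eq_getElem hk
    rw [he]
    rcases hu : u[k] with a | x
    · rfl
    · have hx : x = 0 := h k x (by rw [he, hu])
      subst hx
      simp
  · rw [List.getElem?_eq_none (by rw [reEncode_length]; omega),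
      List.getElem?_eq_none (by omega)]

lemma AllZero_drop {u : List (ℕ ⊕ ℕ)} (h : AllZero u) (m : ℕ) : AllZero (u.drop m) :=
  fun k x hk => h (m + k) x (by rwa [List.getElem?_drop] at hk)

lemma AllZero_wpar (n i' : ℕ) : AllZero (wpar n (i' + 1)) := by
  intro k x h
  rw [wpar_getElem?] at h
  by_cases hk : k < 2 * n
  · rw [if_pos hk] at h
    rcases (by omega : k % 2 = 0 ∨ k % 2 = 1) with hk2 | hk2 <;> simp [hk2] at h
    omega
  · rw [if_neg hk] at h; exact absurd h (by simp)

lemma sl_iter_eq_drop : ∀ (j : ℕ) {u : List (ℕ ⊕ ℕ)}, AllZero u → sl^[j] u = u.drop j := by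
  intro j
  induction j with
  | zero => intro u _; simp
  | succ j ih =>
    intro u h
    rw [Function.iterate_succ_apply]
    have htail : sl u = u.drop 1 := by
      rw [sl, ← List.drop_one, reEncode_one_eq_self (AllZero_drop h 1)]
    rw [htail, ih (AllZero_drop h 1), List.drop_drop]
    congr 1
    omega

end Aux5


/-- For every `n ≥ 1`: `|T_n| = 6n + 2`; each `wᵢ` (`1 ≤ i ≤ n`) is a branching
element of `PrevSub (T_n)`, witnessed by `wᵢ·0` and `wᵢ·(2n)`; and the implicit
suffix-link closure `{ slʲ(wᵢ) : 1 ≤ i ≤ n, 0 ≤ j < 2n }` is a subset of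
`PrevSub (T_n)` of cardinality exactly `2n²`. -/
theorem suffix_link_closure_quadratic (n : ℕ) (hn : 1 ≤ n) :
    (Tpar n).length = 6 * n + 2 ∧
    (∀ i, 1 ≤ i → i ≤ n →
      wpar n i ++ [Sum.inr 0] ∈ PrevSub (Tpar n) ∧
      wpar n i ++ [Sum.inr (2 * n)] ∈ PrevSub (Tpar n) ∧
      Branching (Tpar n) (wpar n i)) ∧
    {u : List (ℕ ⊕ ℕ) | ∃ i j, 1 ≤ i ∧ i ≤ n ∧ j < 2 * n ∧ u = sl^[j] (wpar n i)} ⊆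
      PrevSub (Tpar n) ∧
    {u : List (ℕ ⊕ ℕ) | ∃ i j, 1 ≤ i ∧ i ≤ n ∧ j < 2 * n ∧ u = sl^[j] (wpar n i)}.ncard =
      2 * n ^ 2 := by
  refine ⟨Tpar_length n, ?_, ?_, ?_⟩
  · intro i h1 h2
    obtain ⟨i', rfl⟩ : ∃ i', i = i' + 1 := ⟨i - 1, by omega⟩
    have hm0 : wpar n (i' + 1) ++ [Sum.inr 0] ∈ PrevSub (Tpar n) :=
      ⟨win n (2 * n + 2 * i') (2 * n + 1), win_infix n _ _, (enc2full n i' h2).symm⟩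
    have hm1 : wpar n (i' + 1) ++ [Sum.inr (2 * n)] ∈ PrevSub (Tpar n) :=
      ⟨win n (2 * i') (2 * n + 1), win_infix n _ _, (enc1 n i' h2).symm⟩
    have hw : wpar n (i' + 1) ∈ PrevSub (Tpar n) := by
      have h0 := encj n i' h2 0 (by omega)
      simp only [Nat.add_zero, Nat.sub_zero, List.drop_zero] at h0
      exact ⟨win n (2 * n + 2 * i') (2 * n), win_infix n _ _, h0.symm⟩
    exact ⟨hm0, hm1, hw, Sum.inr 0, Sum.inr (2 * n), by simp; omega, hm0, hm1⟩
  · rintro u ⟨i, j, h1, h2, h3, rfl⟩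
    obtain ⟨i', rfl⟩ : ∃ i', i = i' + 1 := ⟨i - 1, by omega⟩
    rw [sl_iter_eq_drop j (AllZero_wpar n i')]
    exact ⟨win n (2 * n + 2 * i' + j) (2 * n - j), win_infix n _ _,
      (encj n i' h2 j (by omega)).symm⟩
  · have hset : {u : List (ℕ ⊕ ℕ) | ∃ i j, 1 ≤ i ∧ i ≤ n ∧ j < 2 * n ∧ u = sl^[j] (wpar n i)} =
        ↑((Finset.Icc 1 n ×ˢ Finset.range (2 * n)).image
          (fun p : ℕ × ℕ => (wpar n p.1).drop p.2)) := by
      ext u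
      simp only [Set.mem_setOf_eq, Finset.coe_image, Set.mem_image, Finset.mem_coe,
        Finset.mem_product, Finset.mem_Icc, Finset.mem_range]
      constructor
      · rintro ⟨i, j, h1, h2, h3, rfl⟩
        refine ⟨(i, j), ⟨⟨h1, h2⟩, h3⟩, ?_⟩
        obtain ⟨i', rfl⟩ : ∃ i', i = i' + 1 := ⟨i - 1, by omega⟩
        rw [sl_iter_eq_drop j (AllZero_wpar n i')]
      · rintro ⟨⟨i, j⟩, ⟨⟨h1, h2⟩, h3⟩, rfl⟩
        refine ⟨i, j, h1, h2, h3, ?_⟩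
        obtain ⟨i', rfl⟩ : ∃ i', i = i' + 1 := ⟨i - 1, by omega⟩
        rw [sl_iter_eq_drop j (AllZero_wpar n i')]
    rw [hset, Set.ncard_coe_finset]
    rw [Finset.card_image_of_injOn, Finset.card_product, Nat.card_Icc, Finset.card_range]
    · simp; ring
    · rintro ⟨i, j⟩ hp ⟨i2, j2⟩ hq heq
      simp only [Finset.coe_product, Set.mem_prod, Finset.mem_coe, Finset.mem_Icc,
        Finset.mem_range] at hp hq
      obtain ⟨⟨hi1, hi2⟩, hj⟩ := hp
      obtain ⟨⟨hi1', hi2'⟩, hj'⟩ := hq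
      simp only at heq
      have hlen := congrArg List.length heq
      rw [List.length_drop, List.length_drop, wpar_length, wpar_length] at hlen
      have hjj : j = j2 := by omega
      subst hjj
      obtain ⟨i', rfl⟩ : ∃ i', i = i' + 1 := ⟨i - 1, by omega⟩
      obtain ⟨i2', rfl⟩ : ∃ i2', i2 = i2' + 1 := ⟨i2 - 1, by omega⟩
      set k0 : ℕ := if j % 2 = 0 then 1 else 0 with hk0
      have hodd : (j + k0) % 2 = 1 := by
        rcases (by omega : j % 2 = 0 ∨ j % 2 = 1) with h | h <;> simp [hk0, h] <;> omega
      have hjk : j + k0 < 2 * n := by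
        rcases (by omega : j % 2 = 0 ∨ j % 2 = 1) with h | h <;> simp [hk0, h] <;> omega
      have h := congrArg (fun l : List (ℕ ⊕ ℕ) => l[k0]?) heq
      beta_reduce at h
      rw [List.getElem?_drop, List.getElem?_drop, wpar_getElem?, wpar_getElem?,
        if_pos hjk, if_pos hjk, if_neg (by omega), if_neg (by omega)] at h
      simp only [Option.some.injEq, Sum.inl.injEq, Nat.add_right_cancel_iff] at h
      have hii : i' = i2' := by
        rcases lt_trichotomy i' i2' with hlt | heq2 | hlt
        · exfalso
          have hm := mod_ne_shift (n := n) (d := i2' - i') (b := i' + (j + k0) / 2)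
            (by omega) (by omega)
          rw [show i' + (j + k0) / 2 + (i2' - i') = i2' + (j + k0) / 2 by omega] at hm
          exact hm h.symm
        · exact heq2
        · exfalso
          have hm := mod_ne_shift (n := n) (d := i' - i2') (b := i2' + (j + k0) / 2)
            (by omega) (by omega)
          rw [show i2' + (j + k0) / 2 + (i' - i2') = i' + (j + k0) / 2 by omega] at hm
          exact hm h
      simp [hii]
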